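/- For every k ≥ 2, the set F_k of diagonal unitaries belonging to C_k is a group: it is closed under products and inverses. -/

import Mathlib

open Matrix Complex

/-- Index type for `n`-qubit computational basis states. -/
abbrev Q (n : ℕ) := Fin n → Fin 2

/-- The four single-qubit Pauli matrices I, X, Y, Z. -/
noncomputable def pauli1 : Fin 4 → Matrix (Fin 2) (Fin 2) ℂ :=
  ![1, !![0, 1; 1, 0], !![0, -Complex.I; Complex.I, 0], !![1, 0; 0, -1]]

/-- The tensor product of `n` single-qubit operators. -/
noncomputable def tensorOp {n : ℕ} (f : Fin n → Matrix (Fin 2) (Fin 2) ℂ) :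
    Matrix (Q n) (Q n) ℂ :=
  Matrix.of fun x y => ∏ i, f i (x i) (y i)

/-- The `n`-qubit Pauli group: tensor products of Pauli matrices with phases ±1, ±i. -/
noncomputable def PauliGroup (n : ℕ) : Set (Matrix (Q n) (Q n) ℂ) :=
  { M | ∃ (s : Fin 4) (f : Fin n → Fin 4),
      M = Complex.I ^ (s : ℕ) • tensorOp fun i => pauli1 (f i) }

/-- The Clifford hierarchy: `Ck n 1` is the Pauli group and
`Ck n (k+1) = {U unitary : U P U† ∈ Ck n k for all Paulis P}`. -/
noncomputable def Ck (n : ℕ) : ℕ → Set (Matrix (Q n) (Q n) ℂ)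
  | 0 => PauliGroup n
  | 1 => PauliGroup n
  | (k + 2) => { U | U ∈ Matrix.unitaryGroup (Q n) ℂ ∧
      ∀ P ∈ PauliGroup n, U * P * Uᴴ ∈ Ck n (k + 1) }

/-- The set of diagonal gates in `C_k`. -/
noncomputable def Fk (n k : ℕ) : Set (Matrix (Q n) (Q n) ℂ) :=
  { U ∈ Ck n k | U.IsDiag }


/-- permutation action of each pauli on basis -/
def psig (a : Fin 4) (x : Fin 2) : Fin 2 :=
  match a.1 with | 1 => x + 1 | 2 => x + 1 | _ => x

/-- phase table -/
def pm (a b : Fin 4) : ℕ :=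
  match a.1, b.1 with
  | 1,2 => 1 | 2,3 => 1 | 3,1 => 1 | 2,1 => 3 | 3,2 => 3 | 1,3 => 3 | _,_ => 0

/-- product table -/
def pt (a b : Fin 4) : Fin 4 :=
  match a.1, b.1 with
  | 0,c => ⟨c % 4, Nat.mod_lt _ (by norm_num)⟩
  | c,0 => ⟨c % 4, Nat.mod_lt _ (by norm_num)⟩
  | 1,2 => 3 | 2,1 => 3 | 2,3 => 1 | 3,2 => 1 | 3,1 => 2 | 1,3 => 2 | _,_ => 0

lemma psig_invol (a : Fin 4) (x : Fin 2) : psig a (psig a x) = x := by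
  fin_cases a <;> fin_cases x <;> rfl

lemma pauli1_support (a : Fin 4) (x y : Fin 2) (h : pauli1 a x y ≠ 0) : x = psig a y := by
  fin_cases a <;> fin_cases x <;> fin_cases y <;>
    simp_all [pauli1, psig, Matrix.one_apply, Complex.ext_iff]

lemma pauli1_herm (a : Fin 4) : (pauli1 a)ᴴ = pauli1 a := by
  fin_cases a <;> ext x y <;> fin_cases x <;> fin_cases y <;>
    simp [pauli1, Matrix.conjTranspose_apply, Matrix.one_apply, Complex.ext_iff]

lemma pauli1_mul (a b : Fin 4) :
    pauli1 a * pauli1 b = Complex.I ^ (pm a b) • pauli1 (pt a b) := by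
  fin_cases a <;> fin_cases b <;> ext x y <;> fin_cases x <;> fin_cases y <;>
    simp [pauli1, pm, pt, Matrix.mul_apply, Fin.sum_univ_two, Matrix.one_apply,
      Complex.ext_iff, pow_succ]

lemma pauli1_mul_self (a : Fin 4) : pauli1 a * pauli1 a = 1 := by
  rw [pauli1_mul]
  fin_cases a <;> norm_num [pm, pt, pauli1] <;> rfl


lemma tensorOp_mul {n : ℕ} (f g : Fin n → Matrix (Fin 2) (Fin 2) ℂ) :
    tensorOp f * tensorOp g = tensorOp (fun i => f i * g i) := by
  ext x y
  simp only [tensorOp, Matrix.mul_apply, Matrix.of_apply, ← Finset.prod_mul_distrib]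
  rw [Fintype.prod_sum (fun i j => f i (x i) j * g i j (y i))]

lemma tensorOp_conjTranspose {n : ℕ} (f : Fin n → Matrix (Fin 2) (Fin 2) ℂ) :
    (tensorOp f)ᴴ = tensorOp (fun i => (f i)ᴴ) := by
  ext x y
  simp [tensorOp, Matrix.conjTranspose_apply, map_prod]

lemma tensorOp_one {n : ℕ} : tensorOp (fun _ : Fin n => (1 : Matrix (Fin 2) (Fin 2) ℂ)) = 1 := by
  ext x y
  simp only [tensorOp, Matrix.of_apply, Matrix.one_apply]
  by_cases h : x = y
  · subst h; simp
  · rw [if_neg h]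
    obtain ⟨i, hi⟩ := Function.ne_iff.mp h
    exact Finset.prod_eq_zero (Finset.mem_univ i) (by rw [if_neg hi])

lemma tensorOp_smul {n : ℕ} (c : Fin n → ℂ) (f : Fin n → Matrix (Fin 2) (Fin 2) ℂ) :
    tensorOp (fun i => c i • f i) = (∏ i, c i) • tensorOp f := by
  ext x y
  simp [tensorOp, Finset.prod_mul_distrib]

lemma I_pow_mod4 (N : ℕ) : Complex.I ^ N = Complex.I ^ (N % 4) := by
  conv_lhs => rw [← Nat.div_add_mod N 4]
  rw [pow_add, pow_mul, Complex.I_pow_four, one_pow, one_mul]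

open Fin.NatCast in
lemma I_pow_natCast (N : ℕ) : Complex.I ^ N = Complex.I ^ (((N : Fin 4)) : ℕ) := by
  rw [Fin.val_natCast, I_pow_mod4]

lemma pauliGroup_one (n : ℕ) : (1 : Matrix (Q n) (Q n) ℂ) ∈ PauliGroup n := by
  refine ⟨0, fun _ => 0, ?_⟩
  have : (fun i : Fin n => pauli1 0) = fun _ : Fin n => (1 : Matrix (Fin 2) (Fin 2) ℂ) := by
    funext i; simp [pauli1]
  simp [this, tensorOp_one]

open Fin.NatCast in
lemma pauliGroup_mul {n : ℕ} {P R : Matrix (Q n) (Q n) ℂ}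
    (hP : P ∈ PauliGroup n) (hR : R ∈ PauliGroup n) : P * R ∈ PauliGroup n := by
  obtain ⟨s, F, rfl⟩ := hP
  obtain ⟨t, G, rfl⟩ := hR
  refine ⟨(((s : ℕ) + (t : ℕ) + ∑ i, pm (F i) (G i) : ℕ) : Fin 4),
    fun i => pt (F i) (G i), ?_⟩
  rw [smul_mul_smul_comm, tensorOp_mul, ← I_pow_natCast]
  have : (fun i => pauli1 (F i) * pauli1 (G i)) =
      fun i => Complex.I ^ (pm (F i) (G i)) • pauli1 (pt (F i) (G i)) := by
    funext i; rw [pauli1_mul]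
  rw [this, tensorOp_smul, smul_smul]
  congr 1
  rw [Finset.prod_pow_eq_pow_sum, ← pow_add, ← pow_add]

open Fin.NatCast in
lemma pauliGroup_conjTranspose {n : ℕ} {P : Matrix (Q n) (Q n) ℂ}
    (hP : P ∈ PauliGroup n) : Pᴴ ∈ PauliGroup n := by
  obtain ⟨s, F, rfl⟩ := hP
  refine ⟨((3 * (s : ℕ) : ℕ) : Fin 4), F, ?_⟩
  rw [Matrix.conjTranspose_smul, tensorOp_conjTranspose, ← I_pow_natCast]
  have h1 : (fun i => (pauli1 (F i))ᴴ) = fun i => pauli1 (F i) := by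
    funext i; rw [pauli1_herm]
  rw [h1]
  congr 1
  rw [pow_mul]
  have : (Complex.I ^ 3) = starRingEnd ℂ Complex.I := by
    simp [pow_succ, Complex.I_sq, Complex.conj_I]
  rw [this, ← map_pow]
  rfl

lemma pauliGroup_unitary {n : ℕ} {P : Matrix (Q n) (Q n) ℂ}
    (hP : P ∈ PauliGroup n) : P ∈ Matrix.unitaryGroup (Q n) ℂ := by
  rw [Matrix.mem_unitaryGroup_iff]
  obtain ⟨s, F, rfl⟩ := hP
  show _ * (_)ᴴ = _
  rw [Matrix.conjTranspose_smul, tensorOp_conjTranspose, smul_mul_smul_comm, tensorOp_mul]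
  have h1 : (fun i => pauli1 (F i) * (pauli1 (F i))ᴴ) =
      fun _ : Fin n => (1 : Matrix (Fin 2) (Fin 2) ℂ) := by
    funext i; rw [pauli1_herm, pauli1_mul_self]
  rw [h1, tensorOp_one]
  have : Complex.I ^ (s:ℕ) * star (Complex.I ^ (s:ℕ)) = 1 := by
    rw [star_pow, Complex.star_def, Complex.conj_I, ← mul_pow, mul_neg,
      Complex.I_mul_I, neg_neg, one_pow]
  rw [this, one_smul]

lemma pauliGroup_support {n : ℕ} {P : Matrix (Q n) (Q n) ℂ}
    (hP : P ∈ PauliGroup n) : ∃ π : Q n → Q n, Function.Involutive π ∧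
      ∀ x y, P x y ≠ 0 → x = π y := by
  obtain ⟨s, F, rfl⟩ := hP
  refine ⟨fun y i => psig (F i) (y i), fun y => by funext i; exact psig_invol _ _, ?_⟩
  intro x y h
  rw [Matrix.smul_apply] at h
  have h2 : tensorOp (fun i => pauli1 (F i)) x y ≠ 0 := fun hz => h (by rw [hz, smul_zero])
  rw [tensorOp, Matrix.of_apply] at h2
  funext i
  exact pauli1_support _ _ _ (Finset.prod_ne_zero_iff.mp h2 i (Finset.mem_univ i))

section DiagLemmas
variable {m : Type*} [Fintype m] [DecidableEq m]

lemma isDiag_mul {A B : Matrix m m ℂ} (hA : A.IsDiag) (hB : B.IsDiag) : (A * B).IsDiag := by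
  intro x y hxy
  rw [Matrix.mul_apply]
  apply Finset.sum_eq_zero
  intro a _
  by_cases h : x = a
  · subst h; rw [hB hxy, mul_zero]
  · rw [hA h, zero_mul]

lemma diag_comm {A B : Matrix m m ℂ} (hA : A.IsDiag) (hB : B.IsDiag) : A * B = B * A := by
  rw [← hA.diagonal_diag, ← hB.diagonal_diag, Matrix.diagonal_mul_diagonal,
    Matrix.diagonal_mul_diagonal]
  exact congrArg _ (funext fun i => mul_comm _ _)

lemma isDiag_conj {U P : Matrix m m ℂ} (hU : U.IsDiag) (π : m → m)
    (hπ : Function.Involutive π) (hs : ∀ x y, P x y ≠ 0 → x = π y) :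
    (Pᴴ * U * P).IsDiag := by
  intro x y hxy
  rw [Matrix.mul_apply]
  apply Finset.sum_eq_zero
  intro b _
  by_cases hb : P b y = 0
  · rw [hb, mul_zero]
  · have hby : b = π y := hs b y hb
    suffices h : (Pᴴ * U) x b = 0 by rw [h, zero_mul]
    rw [Matrix.mul_apply]
    apply Finset.sum_eq_zero
    intro a _
    by_cases ha : P a x = 0
    · simp [Matrix.conjTranspose_apply, ha]
    · have hax : a = π x := hs a x ha
      have hab : a ≠ b := by
        intro h
        exact hxy (hπ.injective (by rw [← hax, ← hby, h]))
      rw [hU hab, mul_zero]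

end DiagLemmas

lemma mem_Ck_two {n k : ℕ} {U : Matrix (Q n) (Q n) ℂ} :
    U ∈ Ck n (k + 2) ↔ U ∈ Matrix.unitaryGroup (Q n) ℂ ∧
      ∀ P ∈ PauliGroup n, U * P * Uᴴ ∈ Ck n (k + 1) := Iff.rfl

lemma mem_Fk {n k : ℕ} {U : Matrix (Q n) (Q n) ℂ} :
    U ∈ Fk n k ↔ U ∈ Ck n k ∧ U.IsDiag := Iff.rfl

lemma hermUU {n : ℕ} {U : Matrix (Q n) (Q n) ℂ} (h : U ∈ Matrix.unitaryGroup (Q n) ℂ) :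
    Uᴴ * U = 1 := by
  have := Matrix.mem_unitaryGroup_iff'.mp h
  rwa [Matrix.star_eq_conjTranspose] at this

lemma hermUU' {n : ℕ} {U : Matrix (Q n) (Q n) ℂ} (h : U ∈ Matrix.unitaryGroup (Q n) ℂ) :
    U * Uᴴ = 1 := by
  have := Matrix.mem_unitaryGroup_iff.mp h
  rwa [Matrix.star_eq_conjTranspose] at this

lemma conjTranspose_mem_unitary {n : ℕ} {U : Matrix (Q n) (Q n) ℂ}
    (h : U ∈ Matrix.unitaryGroup (Q n) ℂ) : Uᴴ ∈ Matrix.unitaryGroup (Q n) ℂ := by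
  rw [← Matrix.star_eq_conjTranspose]
  exact Unitary.star_mem h

/-- Key decomposition: for diagonal unitary `U` and Pauli `P`,
`U P Uᴴ = P D` with `D := Pᴴ (U P Uᴴ)` diagonal and unitary. -/
lemma decomp {n : ℕ} {U P : Matrix (Q n) (Q n) ℂ}
    (hUu : U ∈ Matrix.unitaryGroup (Q n) ℂ) (hUd : U.IsDiag) (hP : P ∈ PauliGroup n) :
    U * P * Uᴴ = P * (Pᴴ * (U * P * Uᴴ)) ∧ (Pᴴ * (U * P * Uᴴ)).IsDiag ∧
      (Pᴴ * (U * P * Uᴴ)) ∈ Matrix.unitaryGroup (Q n) ℂ := by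
  have hPu := pauliGroup_unitary hP
  refine ⟨?_, ?_, ?_⟩
  · rw [← mul_assoc, hermUU' hPu, one_mul]
  · obtain ⟨π, hπ, hs⟩ := pauliGroup_support hP
    have h1 : Pᴴ * (U * P * Uᴴ) = (Pᴴ * U * P) * Uᴴ := by simp only [mul_assoc]
    rw [h1]
    exact isDiag_mul (isDiag_conj hUd π hπ hs) hUd.conjTranspose
  · exact mul_mem (conjTranspose_mem_unitary hPu)
      (mul_mem (mul_mem hUu hPu) (conjTranspose_mem_unitary hUu))

lemma master (n : ℕ) : ∀ k : ℕ,
    (∀ P ∈ PauliGroup n, P ∈ Ck n k) ∧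
    (∀ W ∈ Ck n k, W ∈ Matrix.unitaryGroup (Q n) ℂ) ∧
    (∀ P ∈ PauliGroup n, ∀ W ∈ Ck n k,
      P * W ∈ Ck n k ∧ W * P ∈ Ck n k ∧ P * W * Pᴴ ∈ Ck n k) ∧
    (∀ U V, U ∈ Fk n k → V ∈ Fk n k → U * V ∈ Fk n k) ∧
    (∀ U ∈ Fk n k, Uᴴ ∈ Fk n k) := by
  have base : (∀ P ∈ PauliGroup n, P ∈ PauliGroup n) ∧
      (∀ W ∈ PauliGroup n, W ∈ Matrix.unitaryGroup (Q n) ℂ) ∧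
      (∀ P ∈ PauliGroup n, ∀ W ∈ PauliGroup n,
        P * W ∈ PauliGroup n ∧ W * P ∈ PauliGroup n ∧ P * W * Pᴴ ∈ PauliGroup n) ∧
      (∀ U V : Matrix (Q n) (Q n) ℂ, (U ∈ PauliGroup n ∧ U.IsDiag) →
        (V ∈ PauliGroup n ∧ V.IsDiag) → (U * V ∈ PauliGroup n ∧ (U * V).IsDiag)) ∧
      (∀ U : Matrix (Q n) (Q n) ℂ, (U ∈ PauliGroup n ∧ U.IsDiag) →
        (Uᴴ ∈ PauliGroup n ∧ Uᴴ.IsDiag)) := by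
    refine ⟨fun P hP => hP, fun W hW => pauliGroup_unitary hW, ?_, ?_, ?_⟩
    · exact fun P hP W hW => ⟨pauliGroup_mul hP hW, pauliGroup_mul hW hP,
        pauliGroup_mul (pauliGroup_mul hP hW) (pauliGroup_conjTranspose hP)⟩
    · exact fun U V hU hV => ⟨pauliGroup_mul hU.1 hV.1, isDiag_mul hU.2 hV.2⟩
    · exact fun U hU => ⟨pauliGroup_conjTranspose hU.1, hU.2.conjTranspose⟩
  intro k
  induction k using Nat.strong_induction_on with
  | _ k ih =>
    match k with
    | 0 => exact base
    | 1 => exact base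
    | (k + 2) =>
      obtain ⟨ih1, ih2, ih3, ih4, ih5⟩ := ih (k + 1) (by omega)
      refine ⟨?_, ?_, ?_, ?_, ?_⟩
      · -- Pauli ⊆ Ck (k+2)
        intro P hP
        exact mem_Ck_two.mpr ⟨pauliGroup_unitary hP, fun Q hQ =>
          ih1 _ (pauliGroup_mul (pauliGroup_mul hP hQ) (pauliGroup_conjTranspose hP))⟩
      · exact fun W hW => (mem_Ck_two.mp hW).1
      · -- Pauli multiplication stability
        intro P hP W hW
        obtain ⟨hWu, hWc⟩ := mem_Ck_two.mp hW
        have hPu := pauliGroup_unitary hP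
        refine ⟨mem_Ck_two.mpr ⟨mul_mem hPu hWu, fun Q hQ => ?_⟩,
          mem_Ck_two.mpr ⟨mul_mem hWu hPu, fun Q hQ => ?_⟩,
          mem_Ck_two.mpr ⟨mul_mem (mul_mem hPu hWu) (conjTranspose_mem_unitary hPu),
            fun Q hQ => ?_⟩⟩
        · have e : (P * W) * Q * (P * W)ᴴ = P * (W * Q * Wᴴ) * Pᴴ := by
            simp only [Matrix.conjTranspose_mul, mul_assoc]
          rw [e]
          exact (ih3 P hP _ (hWc Q hQ)).2.2
        · have e : (W * P) * Q * (W * P)ᴴ = W * (P * Q * Pᴴ) * Wᴴ := by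
            simp only [Matrix.conjTranspose_mul, mul_assoc]
          rw [e]
          exact hWc _ (pauliGroup_mul (pauliGroup_mul hP hQ) (pauliGroup_conjTranspose hP))
        · have e : (P * W * Pᴴ) * Q * (P * W * Pᴴ)ᴴ = P * (W * (Pᴴ * Q * P) * Wᴴ) * Pᴴ := by
            simp only [Matrix.conjTranspose_mul, Matrix.conjTranspose_conjTranspose, mul_assoc]
          rw [e]
          have hPQ : Pᴴ * Q * P ∈ PauliGroup n := by
            have := pauliGroup_mul (pauliGroup_mul (pauliGroup_conjTranspose hP) hQ) hP
            exact this
          exact (ih3 P hP _ (hWc _ hPQ)).2.2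
      · -- products of diagonal gates
        rintro U V ⟨hUc, hUd⟩ ⟨hVc, hVd⟩
        obtain ⟨hUu, hUcc⟩ := mem_Ck_two.mp hUc
        obtain ⟨hVu, hVcc⟩ := mem_Ck_two.mp hVc
        refine mem_Fk.mpr ⟨mem_Ck_two.mpr ⟨mul_mem hUu hVu, fun P hP => ?_⟩, isDiag_mul hUd hVd⟩
        obtain ⟨hVdec, hDVd, hDVu⟩ := decomp hVu hVd hP
        obtain ⟨hUdec, hDUd, hDUu⟩ := decomp hUu hUd hP
        set DV := Pᴴ * (V * P * Vᴴ) with hDV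
        set DU := Pᴴ * (U * P * Uᴴ) with hDU
        have hDVmem : DV ∈ Fk n (k + 1) :=
          ⟨(ih3 Pᴴ (pauliGroup_conjTranspose hP) _ (hVcc P hP)).1, hDVd⟩
        have hDUmem : DU ∈ Fk n (k + 1) :=
          ⟨(ih3 Pᴴ (pauliGroup_conjTranspose hP) _ (hUcc P hP)).1, hDUd⟩
        have e : (U * V) * P * (U * V)ᴴ = P * (DU * DV) := by
          have hc : DV * Uᴴ = Uᴴ * DV := diag_comm hDVd hUd.conjTranspose
          calc (U * V) * P * (U * V)ᴴ = U * (V * P * Vᴴ) * Uᴴ := by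
                simp only [Matrix.conjTranspose_mul, mul_assoc]
            _ = U * (P * DV) * Uᴴ := by rw [hVdec]
            _ = (U * P * Uᴴ) * DV := by simp only [mul_assoc]; rw [hc]
            _ = (P * DU) * DV := by rw [hUdec]
            _ = P * (DU * DV) := by rw [mul_assoc]
        rw [e]
        exact (ih3 P hP _ (ih4 DU DV hDUmem hDVmem).1).1
      · -- conjugate transpose of diagonal gates
        rintro U ⟨hUc, hUd⟩
        obtain ⟨hUu, hUcc⟩ := mem_Ck_two.mp hUc
        refine mem_Fk.mpr ⟨mem_Ck_two.mpr ⟨conjTranspose_mem_unitary hUu, fun P hP => ?_⟩,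
          hUd.conjTranspose⟩
        obtain ⟨hUdec, hDd, hDu⟩ := decomp hUu hUd hP
        set D := Pᴴ * (U * P * Uᴴ) with hD
        have hDmem : D ∈ Fk n (k + 1) :=
          ⟨(ih3 Pᴴ (pauliGroup_conjTranspose hP) _ (hUcc P hP)).1, hDd⟩
        have hDhmem : Dᴴ ∈ Fk n (k + 1) := ih5 D hDmem
        have e1 : Uᴴ * (U * P * Uᴴ) * U = P := by
          have h : Uᴴ * (U * P * Uᴴ) * U = (Uᴴ * U) * P * (Uᴴ * U) := by
            simp only [mul_assoc]
          rw [h, hermUU hUu, one_mul, mul_one]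
        rw [hUdec] at e1
        have key : Uᴴ * P * U * D = P := by
          have hc : U * D = D * U := diag_comm hUd hDd
          calc Uᴴ * P * U * D = Uᴴ * (P * D) * U := by simp only [mul_assoc]; rw [hc]
            _ = P := e1
        have e : Uᴴ * P * (Uᴴ)ᴴ = P * Dᴴ := by
          rw [Matrix.conjTranspose_conjTranspose]
          calc Uᴴ * P * U = Uᴴ * P * U * (D * Dᴴ) := by rw [hermUU' hDu, mul_one]
            _ = (Uᴴ * P * U * D) * Dᴴ := by simp only [mul_assoc]
            _ = P * Dᴴ := by rw [key]
        rw [e]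
        exact (ih3 P hP _ hDhmem.1).1


/-- for every `k ≥ 2`, the diagonal gates in `C_k` form a group:
they contain the identity and are closed under products and inverses
(for a diagonal unitary, the inverse is `Uᴴ`). -/
theorem diagonal_Ck_is_group (n k : ℕ) (hk : 2 ≤ k) :
    (1 : Matrix (Q n) (Q n) ℂ) ∈ Fk n k ∧
    (∀ U V, U ∈ Fk n k → V ∈ Fk n k → U * V ∈ Fk n k) ∧
    (∀ U, U ∈ Fk n k → Uᴴ ∈ Fk n k) := by
  obtain ⟨h1, h2, h3, h4, h5⟩ := master n k
  exact ⟨⟨h1 _ (pauliGroup_one n), Matrix.isDiag_one⟩, h4, h5⟩
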